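/- Let G be a simple graph on a finite vertex set in which every vertex has degree exactly 1, let l ≥ 1, and let a₁, b₁, ..., a_l, b_l be 2l pairwise distinct vertices with V_j = {a₁, b₁, ..., a_l, b_l}. Suppose that every edge of G with both endpoints in V_j has the form a_u b_u for some u; that for each u, every neighbor of a_u outside V_j equals a designated vertex x_u ∉ V_j and every neighbor of b_u outside V_j equals a designated vertex z_u ∉ V_j; and that |∂(V_j)| = 2. Then there exists a unique index u such that a_u x_u and b_u z_u are edges of G, and for every u' ≠ u, a_{u'} b_{u'} is an edge of G. -/
import Mathlib


open Finset

variable {V : Type*}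

/-- The size of the edge cut `∂(S)`: the number of edges of `G` with exactly one endpoint
in `S`. -/
def edgeCutSize [Fintype V] [DecidableEq V] (G : SimpleGraph V) [DecidableRel G.Adj]
    (S : Finset V) : ℕ :=
  ((S ×ˢ Sᶜ).filter fun p => G.Adj p.1 p.2).card

/-- The group gadget of the reduction from 3-Dimensional Matching.  Let `G` be a simple
graph on a finite vertex set in which every vertex has degree `1`, let `l ≥ 1`, and let
`a 0, b 0, …, a (l-1), b (l-1)` be `2l` pairwise distinct vertices forming the set
`V_j = (Finset.univ.image a) ∪ (Finset.univ.image b)`.  Suppose every edge of `G` inside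
`V_j` has the form `(a u)(b u)`; for every `u`, every neighbor of `a u` outside `V_j`
equals the designated vertex `x u ∉ V_j` and every neighbor of `b u` outside `V_j` equals
the designated vertex `z u ∉ V_j`; and `|∂(V_j)| = 2`.  Then there is a unique index `u`
such that `(a u)(x u)` and `(b u)(z u)` are edges of `G`, and for every `u' ≠ u`,
`(a u')(b u')` is an edge of `G`. -/
theorem group_gadget [Fintype V] [DecidableEq V]
    (G : SimpleGraph V) [DecidableRel G.Adj] (hdeg : ∀ v, G.degree v = 1)
    (l : ℕ) (hl : 1 ≤ l) (a b x z : Fin l → V)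
    (ha : Function.Injective a) (hb : Function.Injective b)
    (hab : ∀ i j, a i ≠ b j)
    (hx : ∀ i, x i ∉ Finset.univ.image a ∪ Finset.univ.image b)
    (hz : ∀ i, z i ∉ Finset.univ.image a ∪ Finset.univ.image b)
    (hintern : ∀ p q : V, p ∈ Finset.univ.image a ∪ Finset.univ.image b →
      q ∈ Finset.univ.image a ∪ Finset.univ.image b → G.Adj p q →
      ∃ u, s(p, q) = s(a u, b u))
    (hna : ∀ u, ∀ p, G.Adj (a u) p → p ∉ Finset.univ.image a ∪ Finset.univ.image b →
      p = x u)
    (hnb : ∀ u, ∀ p, G.Adj (b u) p → p ∉ Finset.univ.image a ∪ Finset.univ.image b →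
      p = z u)
    (hcut : edgeCutSize G (Finset.univ.image a ∪ Finset.univ.image b) = 2) :
    ∃ u : Fin l,
      (G.Adj (a u) (x u) ∧ G.Adj (b u) (z u) ∧ ∀ u' ≠ u, G.Adj (a u') (b u')) ∧
        ∀ u' : Fin l, G.Adj (a u') (x u') ∧ G.Adj (b u') (z u') → u' = u := by
  classical
  set Vj := Finset.univ.image a ∪ Finset.univ.image b with hVj
  have haV : ∀ u, a u ∈ Vj := fun u =>
    Finset.mem_union_left _ (Finset.mem_image_of_mem a (Finset.mem_univ u))
  have hbV : ∀ u, b u ∈ Vj := fun u =>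
    Finset.mem_union_right _ (Finset.mem_image_of_mem b (Finset.mem_univ u))
  -- unique neighbor
  have huniq : ∀ v p q, G.Adj v p → G.Adj v q → p = q := by
    intro v p q hp hq
    have h : (G.neighborFinset v).card = 1 := hdeg v
    obtain ⟨w, hw⟩ := Finset.card_eq_one.1 h
    have hp' : p ∈ G.neighborFinset v := (SimpleGraph.mem_neighborFinset _ _ _).2 hp
    have hq' : q ∈ G.neighborFinset v := (SimpleGraph.mem_neighborFinset _ _ _).2 hq
    rw [hw, Finset.mem_singleton] at hp' hq'
    rw [hp', hq']
  have hex : ∀ v, ∃ w, G.Adj v w := by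
    intro v
    have h : (G.neighborFinset v).card = 1 := hdeg v
    obtain ⟨w, hw⟩ := Finset.card_pos.1 (h ▸ Nat.one_pos)
    exact ⟨w, (SimpleGraph.mem_neighborFinset _ _ _).1 hw⟩
  -- neighbor of a u is b u or x u
  have hna' : ∀ u q, G.Adj (a u) q → q = b u ∨ q = x u := by
    intro u q hq
    by_cases hqV : q ∈ Vj
    · obtain ⟨u', hs⟩ := hintern _ _ (haV u) hqV hq
      rcases Sym2.eq_iff.1 hs with ⟨h1, h2⟩ | ⟨h1, h2⟩
      · left; rw [h2, ha h1]
      · exact absurd h1 (hab u u')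
    · right; exact hna u q hq hqV
  have hnb' : ∀ u q, G.Adj (b u) q → q = a u ∨ q = z u := by
    intro u q hq
    by_cases hqV : q ∈ Vj
    · obtain ⟨u', hs⟩ := hintern _ _ (hbV u) hqV hq
      rcases Sym2.eq_iff.1 hs with ⟨h1, h2⟩ | ⟨h1, h2⟩
      · exact absurd h1.symm (hab u' u)
      · left; rw [h2, hb h1]
    · right; exact hnb u q hq hqV
  -- if a u is matched outside, so is b u
  have key : ∀ u, G.Adj (a u) (x u) → G.Adj (b u) (z u) := by
    intro u hax
    obtain ⟨q, hq⟩ := hex (b u)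
    rcases hnb' u q hq with rfl | rfl
    · have : b u = x u := huniq (a u) _ _ hq.symm hax
      exact absurd (this ▸ hbV u) (hx u)
    · exact hq
  have key' : ∀ u, G.Adj (b u) (z u) → G.Adj (a u) (x u) := by
    intro u hbz
    obtain ⟨q, hq⟩ := hex (a u)
    rcases hna' u q hq with rfl | rfl
    · have : a u = z u := huniq (b u) _ _ hq.symm hbz
      exact absurd (this ▸ haV u) (hz u)
    · exact hq
  have dich : ∀ u, G.Adj (a u) (b u) ∨ G.Adj (a u) (x u) := by
    intro u
    obtain ⟨q, hq⟩ := hex (a u)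
    rcases hna' u q hq with rfl | rfl
    · exact Or.inl hq
    · exact Or.inr hq
  set D := Finset.univ.filter (fun u => G.Adj (a u) (x u)) with hD
  have hT : (Vj ×ˢ Vjᶜ).filter (fun p => G.Adj p.1 p.2)
      = D.biUnion (fun u => {(a u, x u), (b u, z u)}) := by
    ext ⟨p, q⟩
    simp only [Finset.mem_filter, Finset.mem_product, Finset.mem_compl,
      Finset.mem_biUnion, Finset.mem_insert, Finset.mem_singleton, Prod.mk.injEq,
      Finset.mem_univ, true_and, hD]
    constructor
    · rintro ⟨⟨hp, hq⟩, hadj⟩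
      rcases Finset.mem_union.1 hp with h | h
      · obtain ⟨u, -, rfl⟩ := Finset.mem_image.1 h
        have hqx := hna u q hadj hq
        exact ⟨u, hqx ▸ hadj, Or.inl ⟨rfl, hqx⟩⟩
      · obtain ⟨u, -, rfl⟩ := Finset.mem_image.1 h
        have hqz := hnb u q hadj hq
        exact ⟨u, key' u (hqz ▸ hadj), Or.inr ⟨rfl, hqz⟩⟩
    · rintro ⟨u, hu, ⟨rfl, rfl⟩ | ⟨rfl, rfl⟩⟩
      · exact ⟨⟨haV u, hx u⟩, hu⟩
      · exact ⟨⟨hbV u, hz u⟩, key u hu⟩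
  have hcard2 : ∀ u ∈ D, ({(a u, x u), (b u, z u)} : Finset (V × V)).card = 2 := by
    intro u _
    rw [Finset.card_insert_of_notMem, Finset.card_singleton]
    simp only [Finset.mem_singleton, Prod.mk.injEq, not_and]
    intro h; exact absurd h (hab u u)
  have hdisj : ∀ u ∈ D, ∀ u' ∈ D, u ≠ u' →
      Disjoint ({(a u, x u), (b u, z u)} : Finset (V × V)) {(a u', x u'), (b u', z u')} := by
    intro u _ u' _ hne
    simp only [Finset.disjoint_insert_left, Finset.disjoint_singleton_left,
      Finset.mem_insert, Finset.mem_singleton, Prod.mk.injEq, not_or, not_and]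
    refine ⟨⟨fun h => absurd (ha h) hne, fun h => absurd h (hab u u')⟩,
      ⟨fun h => absurd h.symm (hab u' u), fun h => absurd (hb h) hne⟩⟩
  have hc : D.card = 1 := by
    have : edgeCutSize G Vj = 2 * D.card := by
      rw [edgeCutSize, hT, Finset.card_biUnion hdisj]
      rw [Finset.sum_congr rfl hcard2, Finset.sum_const, smul_eq_mul, Nat.mul_comm]
    rw [this] at hcut; omega
  obtain ⟨u, hu⟩ := Finset.card_eq_one.1 hc
  have huD : u ∈ D := hu ▸ Finset.mem_singleton_self u
  have hax : G.Adj (a u) (x u) := (Finset.mem_filter.1 huD).2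
  refine ⟨u, ⟨hax, key u hax, fun u' hne => ?_⟩, fun u' ⟨h1, _⟩ => ?_⟩
  · rcases dich u' with h | h
    · exact h
    · have : u' ∈ D := Finset.mem_filter.2 ⟨Finset.mem_univ _, h⟩
      rw [hu, Finset.mem_singleton] at this
      exact absurd this hne
  · have : u' ∈ D := Finset.mem_filter.2 ⟨Finset.mem_univ _, h1⟩
    rw [hu, Finset.mem_singleton] at this
    exact this
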